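/- Let n ∈ ℕ and A : Fin n → Bool with 2 · |{i : A i = true}| ≥ n (at least half the elements are successors), and let A' be the result of applying one swap round of the MakeSuccessorHeavy procedure to A. Then for every t with ⌈n/2⌉ ≤ t ≤ n, the t-prefix of A' is successor-heavy, i.e. 4 · |{i : i < t ∧ A' i = true}| ≥ t. -/

import Mathlib

/-- One swap round of the `MakeSuccessorHeavy` procedure: for each index `i`
with `i < n - 1 - i`, if position `i` holds a predecessor (`false`) and the
mirrored position `n - 1 - i` holds a successor (`true`), the two entries are
swapped; all other positions are left unchanged.  Here `Fin.rev i = n - 1 - i`. -/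
def swapRound {n : ℕ} (A : Fin n → Bool) : Fin n → Bool := fun j =>
  if (j : ℕ) < n - 1 - (j : ℕ) ∧ A j = false ∧ A j.rev = true then true
  else if n - 1 - (j : ℕ) < (j : ℕ) ∧ A j.rev = false ∧ A j = true then false
  else A j

lemma swapRound_low_false {n : ℕ} (A : Fin n → Bool) (i : Fin n)
    (h : 2 * (i : ℕ) + 1 < n) (h' : swapRound A i = false) :
    A i = false ∧ A i.rev = false := by
  unfold swapRound at h'
  split_ifs at h' with hc1 hc2
  · exact absurd hc2.1 (by omega)
  · refine ⟨h', ?_⟩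
    have h1 : (i : ℕ) < n - 1 - (i : ℕ) := by omega
    by_contra hR
    exact hc1 ⟨h1, h', by simpa using hR⟩

lemma swapRound_mid {n : ℕ} (A : Fin n → Bool) (i : Fin n)
    (h : 2 * (i : ℕ) + 1 = n) : swapRound A i = A i := by
  unfold swapRound
  rw [if_neg (by omega), if_neg (by omega)]

theorem swapRound_prefixes_successor_heavy (n : ℕ) (A A' : Fin n → Bool)
    (hA : 2 * (Finset.univ.filter fun i : Fin n => A i = true).card ≥ n)
    (hA' : A' = swapRound A) :
    ∀ t : ℕ, (n + 1) / 2 ≤ t → t ≤ n →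
      4 * (Finset.univ.filter fun i : Fin n => (i : ℕ) < t ∧ A' i = true).card ≥ t := by
  intro t ht1 ht2
  classical
  subst hA'
  set A' := swapRound A with hA'
  -- the sets
  set FA := Finset.univ.filter (fun i : Fin n => A i = false) with hFA
  set S := Finset.univ.filter (fun i : Fin n => (i : ℕ) < t ∧ A' i = false) with hS
  set Slow := Finset.univ.filter (fun i : Fin n => (i : ℕ) < n / 2 ∧ A' i = false) with hSlow
  set Smid := Finset.univ.filter (fun i : Fin n => 2 * (i : ℕ) + 1 = n ∧ A' i = false) with hSmid
  set Shigh := Finset.univ.filter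
    (fun i : Fin n => (n + 1) / 2 ≤ (i : ℕ) ∧ (i : ℕ) < t ∧ A' i = false) with hShigh
  -- facts about members
  have hlow_mem : ∀ i ∈ Slow, A i = false ∧ A i.rev = false := by
    intro i hi
    rw [hSlow, Finset.mem_filter] at hi
    exact swapRound_low_false A i (by omega) hi.2.2
  -- total count of trues/falses
  have hpart : FA.card + (Finset.univ.filter fun i : Fin n => A i = true).card = n := by
    have := Finset.card_filter_add_card_filter_not
      (s := (Finset.univ : Finset (Fin n))) (p := fun i => A i = false)
    simpa [hFA, Bool.not_eq_false] using this
  -- S splits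
  have hsplit : S ⊆ Slow ∪ Smid ∪ Shigh := by
    intro i hi
    rw [hS, Finset.mem_filter] at hi
    obtain ⟨-, hit, hif⟩ := hi
    rcases lt_or_ge (i : ℕ) (n / 2) with h | h
    · exact Finset.mem_union_left _ (Finset.mem_union_left _ (by
        rw [hSlow, Finset.mem_filter]; exact ⟨Finset.mem_univ _, h, hif⟩))
    · by_cases hm : 2 * (i : ℕ) + 1 = n
      · exact Finset.mem_union_left _ (Finset.mem_union_right _ (by
          rw [hSmid, Finset.mem_filter]; exact ⟨Finset.mem_univ _, hm, hif⟩))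
      · refine Finset.mem_union_right _ ?_
        rw [hShigh, Finset.mem_filter]
        exact ⟨Finset.mem_univ _, by omega, hit, hif⟩
  have hScard : S.card ≤ Slow.card + Smid.card + Shigh.card :=
    le_trans (Finset.card_le_card hsplit)
      (le_trans (Finset.card_union_le _ _) (by gcongr; exact Finset.card_union_le _ _))
  -- the double counting: Slow ∪ rev(Slow) ∪ Smid ⊆ FA, pairwise disjoint
  have hsub1 : Slow ⊆ FA := by
    intro i hi
    rw [hFA, Finset.mem_filter]
    exact ⟨Finset.mem_univ _, (hlow_mem i hi).1⟩
  have hsub2 : Slow.image Fin.rev ⊆ FA := by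
    intro j hj
    rw [Finset.mem_image] at hj
    obtain ⟨i, hi, rfl⟩ := hj
    rw [hFA, Finset.mem_filter]
    exact ⟨Finset.mem_univ _, (hlow_mem i hi).2⟩
  have hsub3 : Smid ⊆ FA := by
    intro i hi
    rw [hSmid, Finset.mem_filter] at hi
    rw [hFA, Finset.mem_filter]
    refine ⟨Finset.mem_univ _, ?_⟩
    rw [← swapRound_mid A i hi.2.1]
    exact hi.2.2
  have hrevval : ∀ i : Fin n, (Fin.rev i : ℕ) = n - ((i : ℕ) + 1) := fun i => Fin.val_rev i
  have hd1 : Disjoint Slow (Slow.image Fin.rev) := by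
    rw [Finset.disjoint_left]
    intro i hi hj
    rw [Finset.mem_image] at hj
    obtain ⟨k, hk, hki⟩ := hj
    rw [hSlow, Finset.mem_filter] at hi hk
    have := hrevval k
    have hik : (Fin.rev k : ℕ) = (i : ℕ) := by rw [hki]
    have hkn : (k : ℕ) < n := k.isLt
    omega
  have hd2 : Disjoint (Slow ∪ Slow.image Fin.rev) Smid := by
    rw [Finset.disjoint_left]
    intro i hi hj
    rw [hSmid, Finset.mem_filter] at hj
    rcases Finset.mem_union.mp hi with h | h
    · rw [hSlow, Finset.mem_filter] at h; omega
    · rw [Finset.mem_image] at h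
      obtain ⟨k, hk, hki⟩ := h
      rw [hSlow, Finset.mem_filter] at hk
      have := hrevval k
      have hik : (Fin.rev k : ℕ) = (i : ℕ) := by rw [hki]
      have hkn : (k : ℕ) < n := k.isLt
      omega
  have himgcard : (Slow.image Fin.rev).card = Slow.card :=
    Finset.card_image_of_injective _ Fin.rev_injective
  have hdouble : 2 * Slow.card + Smid.card ≤ FA.card := by
    have hsub : (Slow ∪ Slow.image Fin.rev) ∪ Smid ⊆ FA := by
      intro i hi
      rcases Finset.mem_union.mp hi with h | h
      · rcases Finset.mem_union.mp h with h | h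
        · exact hsub1 h
        · exact hsub2 h
      · exact hsub3 h
    have := Finset.card_le_card hsub
    rw [Finset.card_union_of_disjoint hd2, Finset.card_union_of_disjoint hd1, himgcard] at this
    omega
  -- Smid is small and forces n odd
  have hmid1 : Smid.card ≤ 1 := by
    rw [Finset.card_le_one]
    intro a ha b hb
    rw [hSmid, Finset.mem_filter] at ha hb
    exact Fin.ext (by omega)
  have hmid2 : 0 < Smid.card → n % 2 = 1 := by
    intro h
    obtain ⟨i, hi⟩ := Finset.card_pos.mp h
    rw [hSmid, Finset.mem_filter] at hi
    omega
  -- Shigh bounded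
  have hhigh : Shigh.card ≤ t - (n + 1) / 2 := by
    have : Shigh.card ≤ (Finset.Ico ((n + 1) / 2) t).card := by
      apply Finset.card_le_card_of_injOn Fin.val
      · intro i hi
        rw [Finset.mem_coe, hShigh, Finset.mem_filter] at hi
        rw [Finset.mem_coe, Finset.mem_Ico]
        exact ⟨hi.2.1, hi.2.2.1⟩
      · exact Fin.val_injective.injOn
    simpa [Nat.card_Ico] using this
  -- prefix partition: trues + falses = t
  have hpref : (Finset.univ.filter fun i : Fin n => (i : ℕ) < t ∧ A' i = true).card
      + S.card = t := by
    have h1 : (Finset.univ.filter fun i : Fin n => (i : ℕ) < t).card = t := by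
      have himg : ((Finset.univ.filter fun i : Fin n => (i : ℕ) < t).image Fin.val)
          = Finset.range t := by
        ext j
        simp only [Finset.mem_image, Finset.mem_filter, Finset.mem_univ, true_and,
          Finset.mem_range]
        constructor
        · rintro ⟨i, hi, rfl⟩; exact hi
        · intro hj; exact ⟨⟨j, lt_of_lt_of_le hj ht2⟩, hj, rfl⟩
      calc (Finset.univ.filter fun i : Fin n => (i : ℕ) < t).card
          = ((Finset.univ.filter fun i : Fin n => (i : ℕ) < t).image Fin.val).card :=
            (Finset.card_image_of_injective _ Fin.val_injective).symm
        _ = t := by rw [himg, Finset.card_range]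
    have h2 := Finset.card_filter_add_card_filter_not
      (s := Finset.univ.filter fun i : Fin n => (i : ℕ) < t)
      (p := fun i => A' i = true)
    rw [h1] at h2
    rw [hS]
    have e1 : ((Finset.univ.filter fun i : Fin n => (i : ℕ) < t).filter fun i => A' i = true)
        = Finset.univ.filter fun i : Fin n => (i : ℕ) < t ∧ A' i = true := by
      rw [Finset.filter_filter]
    have e2 : ((Finset.univ.filter fun i : Fin n => (i : ℕ) < t).filter fun i => ¬ A' i = true)
        = Finset.univ.filter fun i : Fin n => (i : ℕ) < t ∧ A' i = false := by
      rw [Finset.filter_filter]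
      simp [Bool.not_eq_true]
    rw [e1, e2] at h2
    exact h2
  omega
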